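/- There do not exist pairwise distinct positive integers n, m, k and real numbers λ, γ such that D_n(λ,γ) = D_m(λ,γ) = D_k(λ,γ) = 0. Equivalently, for any fixed real values of the wave speed parameter λ and the constant vorticity γ, the dispersion relation D_n(λ,γ) = 0 holds for at most two positive integers n, so the linearized problem about the uniform horizontal flow has at most two independent solutions. -/

import Mathlib

/-- The dispersion function
`D_n(λ,γ) = 2 n coth(n h) λ² − 2 λ γ − (2 g + n⁴ E₂₂)`. -/
noncomputable def dispersion (h g E22 : ℝ) (n : ℕ) (lam γ : ℝ) : ℝ :=
  2 * n * (Real.cosh (n * h) / Real.sinh (n * h)) * lam ^ 2 - 2 * lam * γ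
    - (2 * g + n ^ 4 * E22)

open Real Set

/-- Key scalar inequality: for `x > 0`,
`3 sinh²x cosh x − x sinh x − 2 x² cosh x > 0`. -/
private lemma key_ineq {x : ℝ} (hx : 0 < x) :
    0 < 3 * sinh x ^ 2 * cosh x - x * sinh x - 2 * x ^ 2 * cosh x := by
  have hs : x < sinh x := self_lt_sinh_iff.mpr hx
  have hc : 1 < cosh x := one_lt_cosh.mpr hx.ne'
  have hs0 : 0 < sinh x := lt_trans hx hs
  have hc0 : (0:ℝ) < cosh x := cosh_pos x
  nlinarith [mul_pos (mul_pos hs0 hs0) (sub_pos.mpr hc),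
    mul_pos hs0 (sub_pos.mpr hs),
    mul_pos (mul_pos hc0 (sub_pos.mpr hs)) (add_pos hx hs0)]

private lemma denom_pos {x : ℝ} (hx : 0 < x) : 0 < sinh x * cosh x - x := by
  have hs : x < sinh x := self_lt_sinh_iff.mpr hx
  have hc : 1 < cosh x := one_lt_cosh.mpr hx.ne'
  nlinarith

/-- `H t = t³ sinh²(th) / (sinh(th) cosh(th) − th)` is strictly monotone on `(0,∞)`. -/
private lemma H_strictMono {h : ℝ} (hh : 0 < h) :
    StrictMonoOn (fun t : ℝ => t ^ 3 * sinh (t * h) ^ 2 /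
      (sinh (t * h) * cosh (t * h) - t * h)) (Ioi (0 : ℝ)) := by
  set H : ℝ → ℝ := fun t => t ^ 3 * sinh (t * h) ^ 2 /
      (sinh (t * h) * cosh (t * h) - t * h) with hHdef
  have hder : ∀ t ∈ Ioi (0 : ℝ), HasDerivAt H
      (((3 * t ^ 2 * sinh (t * h) ^ 2 + t ^ 3 * (2 * sinh (t * h) ^ 1 * (cosh (t * h) * h)))
          * (sinh (t * h) * cosh (t * h) - t * h)
        - t ^ 3 * sinh (t * h) ^ 2 *
          (cosh (t * h) * h * cosh (t * h) + sinh (t * h) * (sinh (t * h) * h) - h))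
        / (sinh (t * h) * cosh (t * h) - t * h) ^ 2) t := by
    intro t ht
    have ht0 : (0 : ℝ) < t := ht
    have hx : 0 < t * h := mul_pos ht0 hh
    have hDpos : 0 < sinh (t * h) * cosh (t * h) - t * h := denom_pos hx
    have hlin : HasDerivAt (fun t : ℝ => t * h) h t := by
      simpa using (hasDerivAt_id t).mul_const h
    have hs : HasDerivAt (fun t : ℝ => sinh (t * h)) (cosh (t * h) * h) t := hlin.sinh
    have hc : HasDerivAt (fun t : ℝ => cosh (t * h)) (sinh (t * h) * h) t := hlin.cosh
    have hN : HasDerivAt (fun t : ℝ => t ^ 3 * sinh (t * h) ^ 2)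
        (3 * t ^ 2 * sinh (t * h) ^ 2
          + t ^ 3 * (2 * sinh (t * h) ^ 1 * (cosh (t * h) * h))) t := by
      have := (hasDerivAt_pow 3 t).mul (hs.pow 2)
      simpa [Pi.mul_def, Pi.pow_def] using this
    have hD : HasDerivAt (fun t : ℝ => sinh (t * h) * cosh (t * h) - t * h)
        (cosh (t * h) * h * cosh (t * h) + sinh (t * h) * (sinh (t * h) * h) - h) t :=
      ((hs.mul hc).sub hlin)
    exact hN.div hD hDpos.ne'
  refine strictMonoOn_of_deriv_pos (convex_Ioi 0) ?_ ?_
  · intro t ht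
    exact ((hder t ht).differentiableAt).continuousAt.continuousWithinAt
  · intro t ht
    rw [interior_Ioi] at ht
    have ht0 : (0 : ℝ) < t := ht
    have hx : 0 < t * h := mul_pos ht0 hh
    have hDpos : 0 < sinh (t * h) * cosh (t * h) - t * h := denom_pos hx
    have hspos : 0 < sinh (t * h) := sinh_pos_iff.mpr hx
    rw [(hder t ht).deriv]
    apply div_pos _ (by positivity)
    have hkey := key_ineq hx
    have hid : cosh (t * h) ^ 2 = sinh (t * h) ^ 2 + 1 := cosh_sq (t * h)
    have hnum : (3 * t ^ 2 * sinh (t * h) ^ 2 + t ^ 3 * (2 * sinh (t * h) ^ 1 * (cosh (t * h) * h)))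
          * (sinh (t * h) * cosh (t * h) - t * h)
        - t ^ 3 * sinh (t * h) ^ 2 *
          (cosh (t * h) * h * cosh (t * h) + sinh (t * h) * (sinh (t * h) * h) - h)
        = t ^ 2 * sinh (t * h) *
          (3 * sinh (t * h) ^ 2 * cosh (t * h) - (t * h) * sinh (t * h)
            - 2 * (t * h) ^ 2 * cosh (t * h)) := by
      linear_combination (t ^ 3 * h * sinh (t * h) ^ 2) * hid
    rw [hnum]
    exact mul_pos (mul_pos (pow_pos ht0 2) hspos) hkey

/-- No three distinct positive reals can solve the dispersion relation. -/
private lemma key (h g E lam γ : ℝ) (hh : 0 < h) (hg : 0 < g) (hE : 0 < E)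
    (a b c : ℝ) (ha : 0 < a) (hab : a < b) (hbc : b < c)
    (Ha : 2 * a * (cosh (a * h) / sinh (a * h)) * lam ^ 2 - 2 * lam * γ
      - (2 * g + a ^ 4 * E) = 0)
    (Hb : 2 * b * (cosh (b * h) / sinh (b * h)) * lam ^ 2 - 2 * lam * γ
      - (2 * g + b ^ 4 * E) = 0)
    (Hc : 2 * c * (cosh (c * h) / sinh (c * h)) * lam ^ 2 - 2 * lam * γ
      - (2 * g + c ^ 4 * E) = 0) : False := by
  set F : ℝ → ℝ := fun t => 2 * t * (cosh (t * h) / sinh (t * h)) * lam ^ 2 - 2 * lam * γ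
      - (2 * g + t ^ 4 * E) with hFdef
  set F' : ℝ → ℝ := fun t =>
      2 * ((sinh (t * h) * cosh (t * h) - t * h) / sinh (t * h) ^ 2) * lam ^ 2
        - 4 * t ^ 3 * E with hF'def
  have hder : ∀ t : ℝ, 0 < t → HasDerivAt F (F' t) t := by
    intro t ht0
    have hx : 0 < t * h := mul_pos ht0 hh
    have hspos : 0 < sinh (t * h) := sinh_pos_iff.mpr hx
    have hlin : HasDerivAt (fun t : ℝ => t * h) h t := by
      simpa using (hasDerivAt_id t).mul_const h
    have hs : HasDerivAt (fun t : ℝ => sinh (t * h)) (cosh (t * h) * h) t := hlin.sinh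
    have hc : HasDerivAt (fun t : ℝ => cosh (t * h)) (sinh (t * h) * h) t := hlin.cosh
    have hu : HasDerivAt (fun t : ℝ => 2 * t * cosh (t * h))
        (2 * cosh (t * h) + 2 * t * (sinh (t * h) * h)) t := by
      have := (((hasDerivAt_id t).const_mul (2 : ℝ)).mul hc)
      simpa [Pi.mul_def, mul_comm, mul_assoc, mul_left_comm] using this
    have hdiv : HasDerivAt (fun t : ℝ => 2 * t * cosh (t * h) / sinh (t * h))
        (((2 * cosh (t * h) + 2 * t * (sinh (t * h) * h)) * sinh (t * h)
          - 2 * t * cosh (t * h) * (cosh (t * h) * h)) / sinh (t * h) ^ 2) t :=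
      hu.div hs hspos.ne'
    have hpow : HasDerivAt (fun t : ℝ => 2 * g + t ^ 4 * E) (4 * t ^ 3 * E) t := by
      have := (hasDerivAt_const t (2 * g)).add ((hasDerivAt_pow 4 t).mul_const E)
      simpa [Pi.add_def] using this
    have hF2 : HasDerivAt (fun t : ℝ => 2 * t * cosh (t * h) / sinh (t * h) * lam ^ 2
        - 2 * lam * γ - (2 * g + t ^ 4 * E))
        (((2 * cosh (t * h) + 2 * t * (sinh (t * h) * h)) * sinh (t * h)
          - 2 * t * cosh (t * h) * (cosh (t * h) * h)) / sinh (t * h) ^ 2 * lam ^ 2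
          - 4 * t ^ 3 * E) t := by
      have := ((hdiv.mul_const (lam ^ 2)).sub_const (2 * lam * γ)).sub hpow
      simpa [Pi.sub_def] using this
    have hfun : F = fun t : ℝ => 2 * t * cosh (t * h) / sinh (t * h) * lam ^ 2
        - 2 * lam * γ - (2 * g + t ^ 4 * E) := by
      funext t; simp only [hFdef]; ring
    have hid : cosh (t * h) ^ 2 = sinh (t * h) ^ 2 + 1 := cosh_sq (t * h)
    have hcalc : (2 * cosh (t * h) + 2 * t * (sinh (t * h) * h)) * sinh (t * h)
        - 2 * t * cosh (t * h) * (cosh (t * h) * h)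
        = 2 * (sinh (t * h) * cosh (t * h) - t * h) := by
      linear_combination (-2 * t * h) * hid
    rw [hcalc] at hF2
    rw [hfun]
    convert hF2 using 1
    simp only [hF'def]
    ring
  -- Rolle on [a,b] and [b,c]
  have hFa : F a = 0 := Ha
  have hFb : F b = 0 := Hb
  have hFc : F c = 0 := Hc
  have hcont : ∀ x y : ℝ, 0 < x → ContinuousOn F (Icc x y) := by
    intro x y hx
    intro t ht
    exact (hder t (lt_of_lt_of_le hx ht.1)).differentiableAt.continuousAt.continuousWithinAt
  obtain ⟨p, hp, hp0⟩ := exists_hasDerivAt_eq_zero hab (hcont a b ha) (hFa.trans hFb.symm)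
    (fun x hx => hder x (ha.trans hx.1))
  obtain ⟨q, hq, hq0⟩ := exists_hasDerivAt_eq_zero hbc (hcont b c (ha.trans hab))
    (hFb.trans hFc.symm) (fun x hx => hder x ((ha.trans hab).trans hx.1))
  have hppos : 0 < p := ha.trans hp.1
  have hqpos : 0 < q := (ha.trans hab).trans hq.1
  have hpq : p < q := hp.2.trans hq.1
  -- From F' p = 0 and F' q = 0, derive H p = H q
  have hxp : 0 < p * h := mul_pos hppos hh
  have hxq : 0 < q * h := mul_pos hqpos hh
  have hsp : 0 < sinh (p * h) := sinh_pos_iff.mpr hxp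
  have hsq : 0 < sinh (q * h) := sinh_pos_iff.mpr hxq
  have hDp : 0 < sinh (p * h) * cosh (p * h) - p * h := denom_pos hxp
  have hDq : 0 < sinh (q * h) * cosh (q * h) - q * h := denom_pos hxq
  have hep : 2 * ((sinh (p * h) * cosh (p * h) - p * h) / sinh (p * h) ^ 2) * lam ^ 2
      = 4 * p ^ 3 * E := by
    have := hp0
    simp only [hF'def] at this
    linarith
  have heq : 2 * ((sinh (q * h) * cosh (q * h) - q * h) / sinh (q * h) ^ 2) * lam ^ 2
      = 4 * q ^ 3 * E := by
    have := hq0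
    simp only [hF'def] at this
    linarith
  have hHpq : p ^ 3 * sinh (p * h) ^ 2 / (sinh (p * h) * cosh (p * h) - p * h)
      = q ^ 3 * sinh (q * h) ^ 2 / (sinh (q * h) * cosh (q * h) - q * h) := by
    have h1 : lam ^ 2 * (sinh (p * h) * cosh (p * h) - p * h)
        = 2 * p ^ 3 * E * sinh (p * h) ^ 2 := by
      have hs2 : sinh (p * h) ^ 2 ≠ 0 := by positivity
      field_simp at hep
      linarith
    have h2 : lam ^ 2 * (sinh (q * h) * cosh (q * h) - q * h)
        = 2 * q ^ 3 * E * sinh (q * h) ^ 2 := by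
      have hs2 : sinh (q * h) ^ 2 ≠ 0 := by positivity
      field_simp at heq
      linarith
    have hlam2 : 0 < lam ^ 2 := by
      nlinarith [h1, hDp, sq_nonneg lam,
        mul_pos (mul_pos hE (pow_pos hppos 3)) (pow_pos hsp 2)]
    have hcross : lam ^ 2 * (p ^ 3 * sinh (p * h) ^ 2 * (sinh (q * h) * cosh (q * h) - q * h))
        = lam ^ 2 * (q ^ 3 * sinh (q * h) ^ 2 * (sinh (p * h) * cosh (p * h) - p * h)) := by
      linear_combination (p ^ 3 * sinh (p * h) ^ 2) * h2 - (q ^ 3 * sinh (q * h) ^ 2) * h1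
    have hX := mul_left_cancel₀ hlam2.ne' hcross
    rw [div_eq_div_iff hDp.ne' hDq.ne']
    linear_combination hX
  exact absurd hHpq (ne_of_lt (H_strictMono hh (Set.mem_Ioi.mpr hppos) (Set.mem_Ioi.mpr hqpos) hpq))

/-- There do not exist pairwise distinct positive integers `n, m, k` and reals
`λ, γ` with `D_n(λ,γ) = D_m(λ,γ) = D_k(λ,γ) = 0`: for fixed `(λ,γ)` the
dispersion relation holds for at most two positive integers `n`. -/
theorem no_triple_root (h g E22 : ℝ) (hh : 0 < h) (hg : 0 < g) (hE : 0 < E22) :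
    ¬ ∃ (n m k : ℕ) (lam γ : ℝ), 0 < n ∧ 0 < m ∧ 0 < k ∧
      n ≠ m ∧ n ≠ k ∧ m ≠ k ∧
      dispersion h g E22 n lam γ = 0 ∧
      dispersion h g E22 m lam γ = 0 ∧
      dispersion h g E22 k lam γ = 0 := by
  rintro ⟨n, m, k, lam, γ, hn, hm, hk, hnm, hnk, hmk, h1, h2, h3⟩
  simp only [dispersion] at h1 h2 h3
  have key' : ∀ x y z : ℕ, 0 < x → x < y → y < z →
      (2 * (x:ℝ) * (cosh (x * h) / sinh (x * h)) * lam ^ 2 - 2 * lam * γ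
        - (2 * g + (x:ℝ) ^ 4 * E22) = 0) →
      (2 * (y:ℝ) * (cosh (y * h) / sinh (y * h)) * lam ^ 2 - 2 * lam * γ
        - (2 * g + (y:ℝ) ^ 4 * E22) = 0) →
      (2 * (z:ℝ) * (cosh (z * h) / sinh (z * h)) * lam ^ 2 - 2 * lam * γ
        - (2 * g + (z:ℝ) ^ 4 * E22) = 0) → False := by
    intro x y z hx hxy hyz Hx Hy Hz
    exact key h g E22 lam γ hh hg hE x y z (by exact_mod_cast hx)
      (by exact_mod_cast hxy) (by exact_mod_cast hyz) Hx Hy Hz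
  rcases lt_trichotomy n m with hab | hab | hab
  · rcases lt_trichotomy m k with hbc | hbc | hbc
    · exact key' n m k hn hab hbc h1 h2 h3
    · exact absurd hbc hmk
    · rcases lt_trichotomy n k with hac | hac | hac
      · exact key' n k m hn hac hbc h1 h3 h2
      · exact absurd hac hnk
      · exact key' k n m hk hac hab h3 h1 h2
  · exact absurd hab hnm
  · rcases lt_trichotomy n k with hac | hac | hac
    · exact key' m n k hm hab hac h2 h1 h3
    · exact absurd hac hnk
    · rcases lt_trichotomy m k with hbc | hbc | hbc
      · exact key' m k n hm hbc hac h2 h3 h1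
      · exact absurd hbc hmk
      · exact key' k m n hk hbc hab h3 h2 h1
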